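/- With the setup of the conditional-independent coupling (X, Y finite sets, Z = X ∩ Y, Q = X ∪ Y, A, B positive definite with common Z×Z submatrix C, and D = (Ã + B̃ - C̃)^{-1}), the X×X submatrix of D equals A and the Y×Y submatrix of D equals B. -/

import Mathlib

open Matrix

variable {Q : Type*} [Fintype Q] [DecidableEq Q]

/-- Zero-extension of a matrix indexed by a finset `X ⊆ Q` to a `Q × Q` matrix. -/
def zeroExtend {X : Finset Q} (A : Matrix X X ℝ) : Matrix Q Q ℝ :=
  Matrix.of fun p q =>
    if hp : p ∈ X then if hq : q ∈ X then A ⟨p, hp⟩ ⟨q, hq⟩ else 0 else 0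

def pid (S : Finset Q) : Matrix Q Q ℝ :=
  Matrix.of fun p q => if p = q ∧ p ∈ S then 1 else 0

lemma pid_mul_apply (S : Finset Q) (N : Matrix Q Q ℝ) (p q : Q) :
    (pid S * N) p q = if p ∈ S then N p q else 0 := by
  rw [Matrix.mul_apply]
  by_cases hp : p ∈ S <;> simp [pid, hp]

lemma mul_pid_apply (S : Finset Q) (N : Matrix Q Q ℝ) (p q : Q) :
    (N * pid S) p q = if q ∈ S then N p q else 0 := by
  rw [Matrix.mul_apply]
  have h : ∀ x : Q, N p x * pid S x q = if x = q then (if q ∈ S then N p q else 0) else 0 := by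
    intro x
    by_cases h : x = q
    · subst h; by_cases hq : x ∈ S <;> simp [pid, hq]
    · simp [pid, h]
  simp_rw [h]
  simp

lemma pid_mul_eq (S : Finset Q) (N : Matrix Q Q ℝ) (h : ∀ p q, p ∉ S → N p q = 0) :
    pid S * N = N := by
  ext p q
  rw [pid_mul_apply]
  by_cases hp : p ∈ S
  · simp [hp]
  · simp [hp, h p q hp]

lemma mul_pid_eq (S : Finset Q) (N : Matrix Q Q ℝ) (h : ∀ p q, q ∉ S → N p q = 0) :
    N * pid S = N := by
  ext p q
  rw [mul_pid_apply]
  by_cases hq : q ∈ S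
  · simp [hq]
  · simp [hq, h p q hq]

lemma pid_mul_pid {S T : Finset Q} (h : S ⊆ T) : pid S * pid T = pid S := by
  apply mul_pid_eq
  intro p q hq
  simp only [pid, Matrix.of_apply, ite_eq_right_iff, and_imp]
  rintro rfl hp
  exact absurd (h hp) hq

lemma pid_mul_pid' {S T : Finset Q} (h : S ⊆ T) : pid T * pid S = pid S := by
  apply pid_mul_eq
  intro p q hp
  simp only [pid, Matrix.of_apply, ite_eq_right_iff, and_imp]
  rintro rfl hp'
  exact absurd (h hp') hp

lemma zeroExtend_apply_mem {X : Finset Q} (M : Matrix X X ℝ) {p q : Q}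
    (hp : p ∈ X) (hq : q ∈ X) : zeroExtend M p q = M ⟨p, hp⟩ ⟨q, hq⟩ := by
  simp [zeroExtend, hp, hq]

lemma zeroExtend_apply_left {X : Finset Q} (M : Matrix X X ℝ) {p : Q} (q : Q)
    (hp : p ∉ X) : zeroExtend M p q = 0 := by
  simp [zeroExtend, hp]

lemma zeroExtend_apply_right {X : Finset Q} (M : Matrix X X ℝ) (p : Q) {q : Q}
    (hq : q ∉ X) : zeroExtend M p q = 0 := by
  by_cases hp : p ∈ X <;> simp [zeroExtend, hp, hq]

lemma zeroExtend_mul {X : Finset Q} (M N : Matrix X X ℝ) :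
    zeroExtend M * zeroExtend N = zeroExtend (M * N) := by
  ext p q
  rw [Matrix.mul_apply]
  by_cases hp : p ∈ X
  · by_cases hq : q ∈ X
    · rw [zeroExtend_apply_mem _ hp hq, Matrix.mul_apply]
      rw [← Finset.sum_subset X.subset_univ
        (fun r _ hr => by rw [zeroExtend_apply_right _ _ hr, zero_mul])]
      rw [← Finset.sum_coe_sort X (fun r => zeroExtend M p r * zeroExtend N r q)]
      apply Finset.sum_congr rfl
      intro r _
      rw [zeroExtend_apply_mem M hp r.2, zeroExtend_apply_mem N r.2 hq]
    · rw [zeroExtend_apply_right _ _ hq]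
      apply Finset.sum_eq_zero
      intro r _
      rw [zeroExtend_apply_right _ _ hq, mul_zero]
  · rw [zeroExtend_apply_left _ _ hp]
    apply Finset.sum_eq_zero
    intro r _
    rw [zeroExtend_apply_left _ _ hp, zero_mul]

lemma zeroExtend_one (X : Finset Q) : zeroExtend (1 : Matrix X X ℝ) = pid X := by
  ext p q
  by_cases hp : p ∈ X
  · by_cases hq : q ∈ X
    · rw [zeroExtend_apply_mem _ hp hq]
      simp [pid, Matrix.one_apply, hp, Subtype.ext_iff]
    · rw [zeroExtend_apply_right _ _ hq]
      simp only [pid, Matrix.of_apply]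
      rw [if_neg (by rintro ⟨rfl, h⟩; exact hq h)]
  · rw [zeroExtend_apply_left _ _ hp]
    simp only [pid, Matrix.of_apply]
    rw [if_neg (by rintro ⟨rfl, h⟩; exact hp h)]

lemma sum_eq_sum_of_injective {m n : Type*} [Fintype m] [Fintype n] [DecidableEq n]
    (f : m → n) (hf : Function.Injective f) (g : n → ℝ)
    (h0 : ∀ i, (∀ j, f j ≠ i) → g i = 0) : ∑ i, g i = ∑ j, g (f j) := by
  rw [← Finset.sum_image (fun x _ y _ h => hf h)]
  apply (Finset.sum_subset (Finset.subset_univ _) _).symm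
  intro i _ hi
  apply h0
  intro j hj
  exact hi (Finset.mem_image.mpr ⟨j, Finset.mem_univ j, hj⟩)

lemma posDef_submatrix_of_injective {m n : Type*} [Fintype m] [Fintype n] [DecidableEq n]
    {M : Matrix n n ℝ} (hM : M.PosDef) (f : m → n) (hf : Function.Injective f) :
    (M.submatrix f f).PosDef := by
  constructor
  · rw [IsHermitian, conjTranspose_submatrix, hM.1.eq]
  · intro x hx
    exact (hM.submatrix hf).2 hx

/-- The `X×X` submatrix of the coupling `D = (Ã + B̃ - C̃)⁻¹` equals `A`, and
its `Y×Y` submatrix equals `B`. -/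
theorem coupling_submatrices (X Y : Finset Q) (hQ : X ∪ Y = Finset.univ)
    (A : Matrix X X ℝ) (B : Matrix Y Y ℝ)
    (C : Matrix (X ∩ Y : Finset Q) (X ∩ Y : Finset Q) ℝ)
    (hA : A.PosDef) (hB : B.PosDef)
    (hAC : ∀ i j : (X ∩ Y : Finset Q),
      A ⟨i, Finset.mem_of_mem_inter_left i.2⟩ ⟨j, Finset.mem_of_mem_inter_left j.2⟩ = C i j)
    (hBC : ∀ i j : (X ∩ Y : Finset Q),
      B ⟨i, Finset.mem_of_mem_inter_right i.2⟩ ⟨j, Finset.mem_of_mem_inter_right j.2⟩ = C i j)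
    (D : Matrix Q Q ℝ)
    (hD : D = (zeroExtend A⁻¹ + zeroExtend B⁻¹ - zeroExtend C⁻¹)⁻¹) :
    (∀ i j : X, D i j = A i j) ∧ (∀ i j : Y, D i j = B i j) := by
  classical
  have hZX : X ∩ Y ⊆ X := Finset.inter_subset_left
  have hZY : X ∩ Y ⊆ Y := Finset.inter_subset_right
  -- invertibility facts
  have hAd : IsUnit A.det := isUnit_iff_ne_zero.mpr hA.det_pos.ne'
  have hBd : IsUnit B.det := isUnit_iff_ne_zero.mpr hB.det_pos.ne'
  have hCpd : C.PosDef := by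
    have hf : Function.Injective
        (fun z : (X ∩ Y : Finset Q) => (⟨z.1, Finset.mem_of_mem_inter_left z.2⟩ : X)) := by
      intro z w h
      simp only [Subtype.mk.injEq] at h
      exact Subtype.ext h
    have hCs : C = A.submatrix
        (fun z : (X ∩ Y : Finset Q) => (⟨z.1, Finset.mem_of_mem_inter_left z.2⟩ : X))
        (fun z : (X ∩ Y : Finset Q) => (⟨z.1, Finset.mem_of_mem_inter_left z.2⟩ : X)) := by
      ext i j
      exact (hAC i j).symm
    rw [hCs]
    exact posDef_submatrix_of_injective hA _ hf
  have hCd : IsUnit C.det := isUnit_iff_ne_zero.mpr hCpd.det_pos.ne'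
  -- notation
  set a := zeroExtend A with ha_def
  set b := zeroExtend B with hb_def
  set c := zeroExtend C with hc_def
  set a' := zeroExtend A⁻¹ with ha'_def
  set b' := zeroExtend B⁻¹ with hb'_def
  set c' := zeroExtend C⁻¹ with hc'_def
  -- support lemmas
  have hsupL : ∀ (S T : Finset Q), S ⊆ T → ∀ (M : Matrix S S ℝ),
      pid T * zeroExtend M = zeroExtend M := fun S T hST M =>
    pid_mul_eq _ _ (fun p q hp => zeroExtend_apply_left _ _ (fun h => hp (hST h)))
  have hsupR : ∀ (S T : Finset Q), S ⊆ T → ∀ (M : Matrix S S ℝ),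
      zeroExtend M * pid T = zeroExtend M := fun S T hST M =>
    mul_pid_eq _ _ (fun p q hq => zeroExtend_apply_right _ _ (fun h => hq (hST h)))
  have hXa : pid X * a = a := hsupL X X subset_rfl A
  have haX : a * pid X = a := hsupR X X subset_rfl A
  have hYb : pid Y * b = b := hsupL Y Y subset_rfl B
  have hbY : b * pid Y = b := hsupR Y Y subset_rfl B
  have hXc : pid X * c = c := hsupL _ X hZX C
  have hcX : c * pid X = c := hsupR _ X hZX C
  have hYc : pid Y * c = c := hsupL _ Y hZY C
  have hcY : c * pid Y = c := hsupR _ Y hZY C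
  have hZc : pid (X ∩ Y) * c = c := hsupL _ _ subset_rfl C
  have hcZ : c * pid (X ∩ Y) = c := hsupR _ _ subset_rfl C
  have ha'X : a' * pid X = a' := hsupR X X subset_rfl A⁻¹
  have hb'Y : b' * pid Y = b' := hsupR Y Y subset_rfl B⁻¹
  have hXc' : pid X * c' = c' := hsupL _ X hZX C⁻¹
  have hYc' : pid Y * c' = c' := hsupL _ Y hZY C⁻¹
  have hZc' : pid (X ∩ Y) * c' = c' := hsupL _ _ subset_rfl C⁻¹
  have hc'Z : c' * pid (X ∩ Y) = c' := hsupR _ _ subset_rfl C⁻¹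
  -- inverse relations
  have ha'a : a' * a = pid X := by
    rw [ha'_def, ha_def, zeroExtend_mul, Matrix.nonsing_inv_mul A hAd, zeroExtend_one]
  have hb'b : b' * b = pid Y := by
    rw [hb'_def, hb_def, zeroExtend_mul, Matrix.nonsing_inv_mul B hBd, zeroExtend_one]
  have hc'c : c' * c = pid (X ∩ Y) := by
    rw [hc'_def, hc_def, zeroExtend_mul, Matrix.nonsing_inv_mul C hCd, zeroExtend_one]
  have hcc' : c * c' = pid (X ∩ Y) := by
    rw [hc'_def, hc_def, zeroExtend_mul, Matrix.mul_nonsing_inv C hCd, zeroExtend_one]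
  -- pid products
  have hZmX : pid (X ∩ Y) * pid X = pid (X ∩ Y) := pid_mul_pid hZX
  have hXmZ : pid X * pid (X ∩ Y) = pid (X ∩ Y) := pid_mul_pid' hZX
  have hZmY : pid (X ∩ Y) * pid Y = pid (X ∩ Y) := pid_mul_pid hZY
  have hYmZ : pid Y * pid (X ∩ Y) = pid (X ∩ Y) := pid_mul_pid' hZY
  -- common Z-block : pid Z * a * pid Z = c, pid Z * b * pid Z = c
  have hZaZ : pid (X ∩ Y) * a * pid (X ∩ Y) = c := by
    ext p q
    rw [mul_pid_apply, pid_mul_apply]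
    by_cases hp : p ∈ X ∩ Y
    · by_cases hq : q ∈ X ∩ Y
      · simp only [hp, hq, if_true]
        rw [ha_def, zeroExtend_apply_mem A (hZX hp) (hZX hq), hc_def,
          zeroExtend_apply_mem C hp hq]
        exact hAC ⟨p, hp⟩ ⟨q, hq⟩
      · simp [hq, hc_def, zeroExtend_apply_right C p hq]
    · simp [hp, hc_def, zeroExtend_apply_left C q hp]
  have hZbZ : pid (X ∩ Y) * b * pid (X ∩ Y) = c := by
    ext p q
    rw [mul_pid_apply, pid_mul_apply]
    by_cases hp : p ∈ X ∩ Y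
    · by_cases hq : q ∈ X ∩ Y
      · simp only [hp, hq, if_true]
        rw [hb_def, zeroExtend_apply_mem B (hZY hp) (hZY hq), hc_def,
          zeroExtend_apply_mem C hp hq]
        exact hBC ⟨p, hp⟩ ⟨q, hq⟩
      · simp [hq, hc_def, zeroExtend_apply_right C p hq]
    · simp [hp, hc_def, zeroExtend_apply_left C q hp]
  -- R6 : restriction to the intersection
  have hbX : b * pid X = b * pid (X ∩ Y) := by
    ext p q
    rw [mul_pid_apply, mul_pid_apply]
    by_cases hq : q ∈ X ∩ Y
    · simp [hq, hZX hq]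
    · by_cases hqX : q ∈ X
      · have hqY : q ∉ Y := fun h => hq (Finset.mem_inter.mpr ⟨hqX, h⟩)
        simp [hqX, hq, hb_def, zeroExtend_apply_right B p hqY]
      · simp [hqX, hq]
  have hXb : pid X * b = pid (X ∩ Y) * b := by
    ext p q
    rw [pid_mul_apply, pid_mul_apply]
    by_cases hp : p ∈ X ∩ Y
    · simp [hp, hZX hp]
    · by_cases hpX : p ∈ X
      · have hpY : p ∉ Y := fun h => hp (Finset.mem_inter.mpr ⟨hpX, h⟩)
        simp [hpX, hp, hb_def, zeroExtend_apply_left B q hpY]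
      · simp [hpX, hp]
  have haY : a * pid Y = a * pid (X ∩ Y) := by
    ext p q
    rw [mul_pid_apply, mul_pid_apply]
    by_cases hq : q ∈ X ∩ Y
    · simp [hq, hZY hq]
    · by_cases hqY : q ∈ Y
      · have hqX : q ∉ X := fun h => hq (Finset.mem_inter.mpr ⟨h, hqY⟩)
        simp [hqY, hq, ha_def, zeroExtend_apply_right A p hqX]
      · simp [hqY, hq]
  have hYa : pid Y * a = pid (X ∩ Y) * a := by
    ext p q
    rw [pid_mul_apply, pid_mul_apply]
    by_cases hp : p ∈ X ∩ Y
    · simp [hp, hZY hp]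
    · by_cases hpY : p ∈ Y
      · have hpX : p ∉ X := fun h => hp (Finset.mem_inter.mpr ⟨h, hpY⟩)
        simp [hpY, hp, ha_def, zeroExtend_apply_left A q hpX]
      · simp [hpY, hp]
  -- partition of unity
  have hXYZ : pid X + pid Y - pid (X ∩ Y) = 1 := by
    ext p q
    by_cases hpq : p = q
    · subst hpq
      have hp : p ∈ X ∨ p ∈ Y := by
        have := Finset.mem_univ p
        rw [← hQ] at this
        exact Finset.mem_union.mp this
      by_cases h1 : p ∈ X <;> by_cases h2 : p ∈ Y <;>
        simp [pid, Matrix.one_apply, h1, h2, Finset.mem_inter] <;> tauto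
    · simp [pid, Matrix.one_apply, hpq]
  -- key cancellation lemmas
  have k1 : c' * b * pid (X ∩ Y) = pid (X ∩ Y) := by
    conv_lhs => rw [← hc'Z]
    rw [show c' * pid (X ∩ Y) * b * pid (X ∩ Y)
        = c' * (pid (X ∩ Y) * b * pid (X ∩ Y)) from by noncomm_ring, hZbZ, hc'c]
  have k2 : c' * a * pid (X ∩ Y) = pid (X ∩ Y) := by
    conv_lhs => rw [← hc'Z]
    rw [show c' * pid (X ∩ Y) * a * pid (X ∩ Y)
        = c' * (pid (X ∩ Y) * a * pid (X ∩ Y)) from by noncomm_ring, hZaZ, hc'c]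
  have k3 : pid (X ∩ Y) * b * c' = pid (X ∩ Y) := by
    conv_lhs => rw [← hZc']
    rw [show pid (X ∩ Y) * b * (pid (X ∩ Y) * c')
        = pid (X ∩ Y) * b * pid (X ∩ Y) * c' from by noncomm_ring, hZbZ, hcc']
  have k4 : pid (X ∩ Y) * a * c' = pid (X ∩ Y) := by
    conv_lhs => rw [← hZc']
    rw [show pid (X ∩ Y) * a * (pid (X ∩ Y) * c')
        = pid (X ∩ Y) * a * pid (X ∩ Y) * c' from by noncomm_ring, hZaZ, hcc']
  -- the explicit inverse
  set E := a + b - c + (a - c) * c' * (b - c) + (b - c) * c' * (a - c) with hE_def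
  have hXE : pid X * E = a + a * c' * b - a * pid (X ∩ Y) := by
    have e0 : pid X * E = pid X * a + pid X * b - pid X * c
        + (pid X * a - pid X * c) * c' * (b - c)
        + (pid X * b - pid X * c) * c' * (a - c) := by
      rw [hE_def]; noncomm_ring
    rw [e0, hXa, hXb, hXc]
    have e1 : (pid (X ∩ Y) * b - c) * c' = 0 := by rw [sub_mul, k3, hcc', sub_self]
    have e2 : (a - c) * c' * (b - c)
        = a * c' * b - a * pid (X ∩ Y) - pid (X ∩ Y) * b + c := by
      have e3 : (a - c) * c' * (b - c)
          = a * c' * b - a * (c' * c) - c * c' * b + c * c' * c := by noncomm_ring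
      rw [e3, hc'c, hcc', hZc]
    rw [e2, e1]
    noncomm_ring
  have hYE : pid Y * E = b + b * c' * a - b * pid (X ∩ Y) := by
    have e0 : pid Y * E = pid Y * a + pid Y * b - pid Y * c
        + (pid Y * a - pid Y * c) * c' * (b - c)
        + (pid Y * b - pid Y * c) * c' * (a - c) := by
      rw [hE_def]; noncomm_ring
    rw [e0, hYa, hYb, hYc]
    have e1 : (pid (X ∩ Y) * a - c) * c' = 0 := by rw [sub_mul, k4, hcc', sub_self]
    have e2 : (b - c) * c' * (a - c)
        = b * c' * a - b * pid (X ∩ Y) - pid (X ∩ Y) * a + c := by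
      have e3 : (b - c) * c' * (a - c)
          = b * c' * a - b * (c' * c) - c * c' * a + c * c' * c := by noncomm_ring
      rw [e3, hc'c, hcc', hZc]
    rw [e2, e1]
    noncomm_ring
  have hZE : pid (X ∩ Y) * E = pid (X ∩ Y) * a + pid (X ∩ Y) * b - c := by
    have e0 : pid (X ∩ Y) * E = pid (X ∩ Y) * a + pid (X ∩ Y) * b - pid (X ∩ Y) * c
        + (pid (X ∩ Y) * a - pid (X ∩ Y) * c) * c' * (b - c)
        + (pid (X ∩ Y) * b - pid (X ∩ Y) * c) * c' * (a - c) := by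
      rw [hE_def]; noncomm_ring
    rw [e0, hZc]
    have f1 : (pid (X ∩ Y) * a - c) * c' = 0 := by rw [sub_mul, k4, hcc', sub_self]
    have f2 : (pid (X ∩ Y) * b - c) * c' = 0 := by rw [sub_mul, k3, hcc', sub_self]
    rw [f1, f2]
    noncomm_ring
  have hE_XX : pid X * E * pid X = a := by
    rw [hXE]
    rw [show (a + a * c' * b - a * pid (X ∩ Y)) * pid X
        = a * pid X + a * c' * (b * pid X) - a * (pid (X ∩ Y) * pid X) from by noncomm_ring,
      haX, hbX, hZmX]
    rw [show a * c' * (b * pid (X ∩ Y)) = a * (c' * b * pid (X ∩ Y)) from by noncomm_ring, k1]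
    noncomm_ring
  have hE_YY : pid Y * E * pid Y = b := by
    rw [hYE]
    rw [show (b + b * c' * a - b * pid (X ∩ Y)) * pid Y
        = b * pid Y + b * c' * (a * pid Y) - b * (pid (X ∩ Y) * pid Y) from by noncomm_ring,
      hbY, haY, hZmY]
    rw [show b * c' * (a * pid (X ∩ Y)) = b * (c' * a * pid (X ∩ Y)) from by noncomm_ring, k2]
    noncomm_ring
  have ha'E : a' * E = pid X + c' * b - pid (X ∩ Y) := by
    rw [show a' * E = a' * (pid X * E) from by rw [← mul_assoc, ha'X], hXE]
    rw [show a' * (a + a * c' * b - a * pid (X ∩ Y))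
        = a' * a + a' * a * (c' * b) - a' * a * pid (X ∩ Y) from by noncomm_ring, ha'a]
    rw [show pid X * (c' * b) = pid X * c' * b from by noncomm_ring, hXc', hXmZ]
  have hb'E : b' * E = pid Y + c' * a - pid (X ∩ Y) := by
    rw [show b' * E = b' * (pid Y * E) from by rw [← mul_assoc, hb'Y], hYE]
    rw [show b' * (b + b * c' * a - b * pid (X ∩ Y))
        = b' * b + b' * b * (c' * a) - b' * b * pid (X ∩ Y) from by noncomm_ring, hb'b]
    rw [show pid Y * (c' * a) = pid Y * c' * a from by noncomm_ring, hYc', hYmZ]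
  have hc'E : c' * E = c' * a + c' * b - pid (X ∩ Y) := by
    rw [show c' * E = c' * (pid (X ∩ Y) * E) from by rw [← mul_assoc, hc'Z], hZE]
    rw [show c' * (pid (X ∩ Y) * a + pid (X ∩ Y) * b - c)
        = c' * pid (X ∩ Y) * a + c' * pid (X ∩ Y) * b - c' * c from by noncomm_ring,
      hc'Z, hc'c]
  have hME : (a' + b' - c') * E = 1 := by
    rw [show (a' + b' - c') * E = a' * E + b' * E - c' * E from by noncomm_ring,
      ha'E, hb'E, hc'E, ← hXYZ]
    abel
  have hDE : D = E := by
    rw [hD]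
    exact Matrix.inv_eq_right_inv hME
  refine ⟨fun i j => ?_, fun i j => ?_⟩
  · have h1 := congrFun (congrFun hE_XX (i : Q)) (j : Q)
    rw [mul_pid_apply, pid_mul_apply, if_pos j.2, if_pos i.2] at h1
    rw [hDE, h1, ha_def, zeroExtend_apply_mem A i.2 j.2]
  · have h1 := congrFun (congrFun hE_YY (i : Q)) (j : Q)
    rw [mul_pid_apply, pid_mul_apply, if_pos j.2, if_pos i.2] at h1
    rw [hDE, h1, hb_def, zeroExtend_apply_mem B i.2 j.2]
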